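/- (Bauer–Fike for Hermitian matrices) Let A be an n×n Hermitian matrix, let u be a unit vector in C^n and λ' a real number. Define the residual r = A u - λ' u. Then there exists an eigenvalue λ of A with |λ - λ'| ≤ ||r||, i.e. min over eigenvalues λ of A of |λ - λ'| is at most the Euclidean norm of r. -/

import Mathlib

open scoped Matrix

/-- Bauer–Fike for Hermitian matrices: for a Hermitian matrix `A`, a unit vector
`u` and a real number `μ`, there is a (real) eigenvalue `lam` of `A` with
`|lam - μ| ≤ ‖A u - μ u‖`. -/
theorem stmt3 {n : ℕ} (A : Matrix (Fin n) (Fin n) ℂ) (hA : A.IsHermitian)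
    (u : EuclideanSpace ℂ (Fin n)) (hu : ‖u‖ = 1) (μ : ℝ) :
    ∃ lam : ℝ,
      Module.End.HasEigenvalue
        (Matrix.toEuclideanLin A : Module.End ℂ (EuclideanSpace ℂ (Fin n))) (lam : ℂ) ∧
      |lam - μ| ≤ ‖Matrix.toEuclideanLin A u - (μ : ℂ) • u‖ := by
  classical
  have hn : Nonempty (Fin n) := by
    by_contra h
    rw [not_nonempty_iff] at h
    have : u = 0 := Subsingleton.elim u 0
    rw [this, norm_zero] at hu
    norm_num at hu
  set T : Module.End ℂ (EuclideanSpace ℂ (Fin n)) := Matrix.toEuclideanLin A with hT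
  set b := hA.eigenvectorBasis with hb
  set lam := hA.eigenvalues with hlam
  -- eigenvector equation
  have heig : ∀ i, T (b i) = (lam i : ℂ) • b i := by
    intro i
    have := hA.mulVec_eigenvectorBasis i
    apply (WithLp.equiv 2 (Fin n → ℂ)).injective
    ext j
    have h2 : (WithLp.equiv 2 (Fin n → ℂ)) (T (b i)) = A *ᵥ (WithLp.equiv 2 (Fin n → ℂ)) (b i) :=
      rfl
    rw [h2]
    have : (A *ᵥ ⇑(b i)) j = (lam i • ⇑(b i)) j := by rw [this]
    simpa [Complex.real_smul] using this
  have hEV : ∀ i, Module.End.HasEigenvalue T ((lam i : ℝ) : ℂ) := by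
    intro i
    exact Module.End.hasEigenvalue_of_hasEigenvector
      ⟨Module.End.mem_eigenspace_iff.mpr (heig i), b.orthonormal.ne_zero i⟩
  -- symmetry of T
  have hsym : LinearMap.IsSymmetric T := Matrix.isHermitian_iff_isSymmetric.mp hA
  -- key: repr of T u
  have hrepr : ∀ i, b.repr (T u) i = (lam i : ℂ) * b.repr u i := by
    intro i
    rw [OrthonormalBasis.repr_apply_apply, OrthonormalBasis.repr_apply_apply,
      ← hsym (b i) u, heig i, inner_smul_left]
    simp
  -- pick minimizing index
  obtain ⟨i0, -, hmin⟩ := Finset.exists_min_image Finset.univ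
    (fun i => |lam i - μ|) ⟨hn.some, Finset.mem_univ _⟩
  refine ⟨lam i0, hEV i0, ?_⟩
  set r := T u - (μ : ℂ) • u with hr
  have hrnn : (0:ℝ) ≤ ‖r‖ := norm_nonneg r
  have hd : (0:ℝ) ≤ |lam i0 - μ| := abs_nonneg _
  -- square comparison
  have hsq : |lam i0 - μ| ^ 2 ≤ ‖r‖ ^ 2 := by
    have h1 : ‖r‖ ^ 2 = ∑ i, ‖b.repr r i‖ ^ 2 := by
      rw [← b.repr.norm_map r, EuclideanSpace.norm_eq, Real.sq_sqrt (by positivity)]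
    have h2 : ∀ i, ‖b.repr r i‖ ^ 2 = (lam i - μ)^2 * ‖b.repr u i‖ ^ 2 := by
      intro i
      have : b.repr r i = ((lam i - μ : ℝ) : ℂ) * b.repr u i := by
        rw [hr, map_sub, map_smul]
        simp [hrepr i]
        ring
      rw [this, norm_mul, mul_pow, Complex.norm_real, Real.norm_eq_abs, sq_abs]
    have h3 : ‖u‖ ^ 2 = ∑ i, ‖b.repr u i‖ ^ 2 := by
      rw [← b.repr.norm_map u, EuclideanSpace.norm_eq, Real.sq_sqrt (by positivity)]
    calc |lam i0 - μ| ^ 2 = ∑ i, |lam i0 - μ|^2 * ‖b.repr u i‖ ^ 2 := by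
            rw [← Finset.mul_sum, ← h3, hu]; ring
      _ ≤ ∑ i, (lam i - μ)^2 * ‖b.repr u i‖ ^ 2 := by
            apply Finset.sum_le_sum
            intro i _
            apply mul_le_mul_of_nonneg_right _ (by positivity)
            rw [← sq_abs (lam i - μ)]
            exact pow_le_pow_left₀ hd (hmin i (Finset.mem_univ i)) 2
      _ = ∑ i, ‖b.repr r i‖ ^ 2 := by
            exact Finset.sum_congr rfl fun i _ => (h2 i).symm
      _ = ‖r‖ ^ 2 := h1.symm
  nlinarith [hsq, hd, hrnn]
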